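/- Let (G_ω, r) be an increasing weighted tree where G is not a star centered at r, and suppose xy is a pendant edge of G with deg_G(y) = 1 and ω(xy) ≤ ω(xv) for every v ∈ N_G(x). Then (I(G_ω)^{t+1} : (xy)^{ω(xy)}) = I(G_ω)^t for all t ≥ 1. -/

import Mathlib

open MvPolynomial SimpleGraph

/-- The weight function `ω` on the edges of `G` is weakly increasing along every
simple path from a leaf to the root `r`. -/
def IsIncreasingRoot {n : ℕ} (G : SimpleGraph (Fin n)) [DecidableRel G.Adj]
    (ω : Sym2 (Fin n) → ℕ) (r : Fin n) : Prop :=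
  ∀ v : Fin n, G.degree v = 1 → ∀ p : G.Walk v r, p.IsPath →
    ∀ i : ℕ, i + 2 < p.support.length →
      ω s(p.support.getD i v, p.support.getD (i + 1) v) ≤
        ω s(p.support.getD (i + 1) v, p.support.getD (i + 2) v)

/-- The weight function `ω` is strictly increasing along every simple path from a leaf
to the root `r`. -/
def IsStrictlyIncreasingRoot {n : ℕ} (G : SimpleGraph (Fin n)) [DecidableRel G.Adj]
    (ω : Sym2 (Fin n) → ℕ) (r : Fin n) : Prop :=
  ∀ v : Fin n, G.degree v = 1 → ∀ p : G.Walk v r, p.IsPath →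
    ∀ i : ℕ, i + 2 < p.support.length →
      ω s(p.support.getD i v, p.support.getD (i + 1) v) <
        ω s(p.support.getD (i + 1) v, p.support.getD (i + 2) v)

/-- A vertex `v₂` is special: there is a simple path `v₁ → v₂ → v₃ → ⋯ → r` from a leaf `v₁`
of length at least 2 with `ω(v₁v₂) = ω(v₂v₃)`. -/
def IsSpecialVertex {n : ℕ} (G : SimpleGraph (Fin n)) [DecidableRel G.Adj]
    (ω : Sym2 (Fin n) → ℕ) (r : Fin n) (v₂ : Fin n) : Prop :=
  ∃ (v₁ : Fin n) (p : G.Walk v₁ r), G.degree v₁ = 1 ∧ p.IsPath ∧ 2 ≤ p.length ∧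
    p.support.getD 1 v₁ = v₂ ∧
    ω s(p.support.getD 0 v₁, p.support.getD 1 v₁) =
      ω s(p.support.getD 1 v₁, p.support.getD 2 v₁)

/-- An edge `uv` is special: there is a simple path `v₁ → u → v → ⋯ → r` (at least 3 vertices)
with `ω(v₁u) = ω(uv)`. -/
def IsSpecialEdge {n : ℕ} (G : SimpleGraph (Fin n))
    (ω : Sym2 (Fin n) → ℕ) (r : Fin n) (e : Sym2 (Fin n)) : Prop :=
  ∃ (v₁ : Fin n) (p : G.Walk v₁ r), p.IsPath ∧ 2 ≤ p.length ∧
    e = s(p.support.getD 1 v₁, p.support.getD 2 v₁) ∧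
    ω s(p.support.getD 0 v₁, p.support.getD 1 v₁) =
      ω s(p.support.getD 1 v₁, p.support.getD 2 v₁)

/-- `μ(v)`: the maximal weight of an edge at `v`. -/
def muWeight {n : ℕ} (G : SimpleGraph (Fin n)) [DecidableRel G.Adj]
    (ω : Sym2 (Fin n) → ℕ) (v : Fin n) : ℕ :=
  (G.neighborFinset v).sup fun u => ω s(u, v)

/-- The set `A(G_ω)` of vertices admitting a simple path `v = v₁ → ⋯ → v_{2m}` (`m ≥ 1`)
with `ω(v_{2m-1}v_{2m}) < μ(v_{2m})`. -/
def Aset {n : ℕ} (G : SimpleGraph (Fin n)) [DecidableRel G.Adj]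
    (ω : Sym2 (Fin n) → ℕ) : Set (Fin n) :=
  {v | ∃ (m : ℕ) (w : Fin n) (p : G.Walk v w), 1 ≤ m ∧ p.IsPath ∧
    p.support.length = 2 * m ∧
    ω s(p.support.getD (2 * m - 2) v, w) < muWeight G ω w}

/-- The edge ideal of the edge-weighted graph `(G, ω)`. -/
noncomputable def edgeIdeal {n : ℕ} (K : Type) [Field K] (G : SimpleGraph (Fin n))
    (ω : Sym2 (Fin n) → ℕ) : Ideal (MvPolynomial (Fin n) K) :=
  Ideal.span {f | ∃ i j : Fin n, G.Adj i j ∧ f = (X i * X j) ^ ω s(i, j)}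

/-- The graded maximal ideal of a polynomial ring. -/
noncomputable def maxIdeal (K : Type) [Field K] (σ : Type) : Ideal (MvPolynomial σ K) :=
  Ideal.span (Set.range (X : σ → MvPolynomial σ K))

/-- `depth (S/I)`, defined as the length of a longest regular sequence on `S/I`
consisting of elements of the graded maximal ideal. -/
noncomputable def quotDepth (K : Type) [Field K] {σ : Type} (I : Ideal (MvPolynomial σ K)) : ℕ :=
  sSup {k : ℕ | ∃ rs : List (MvPolynomial σ K), rs.length = k ∧
    (∀ x ∈ rs, x ∈ maxIdeal K σ) ∧
    RingTheory.Sequence.IsRegular (MvPolynomial σ K ⧸ I) rs}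

namespace ColonPendantAux
variable {n : ℕ}

def edgeExps {n : ℕ} (G : SimpleGraph (Fin n)) (ω : Sym2 (Fin n) → ℕ) :
    Set (Fin n →₀ ℕ) :=
  {d | ∃ i j : Fin n, G.Adj i j ∧
    d = Finsupp.single i (ω s(i, j)) + Finsupp.single j (ω s(i, j))}

def IsSum {n : ℕ} (E : Set (Fin n →₀ ℕ)) (t : ℕ) (d : Fin n →₀ ℕ) : Prop :=
  ∃ M : Multiset (Fin n →₀ ℕ), Multiset.card M = t ∧ (∀ e ∈ M, e ∈ E) ∧ M.sum = d

lemma sum_apply' (M : Multiset (Fin n →₀ ℕ)) (v : Fin n) :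
    M.sum v = (M.map (fun e => e v)).sum :=
  map_multiset_sum (Finsupp.applyAddHom v) M

lemma edgeExps_touch {G : SimpleGraph (Fin n)} {ω : Sym2 (Fin n) → ℕ}
    {e : Fin n →₀ ℕ} (he : e ∈ edgeExps G ω) {v : Fin n} (hv : e v ≠ 0) :
    ∃ u, G.Adj v u ∧
      e = Finsupp.single v (ω s(v, u)) + Finsupp.single u (ω s(v, u)) := by
  classical
  obtain ⟨i, j, hij, rfl⟩ := he
  have hvij : v = i ∨ v = j := by
    by_contra h
    push_neg at h
    simp [Finsupp.add_apply, Finsupp.single_apply, Ne.symm h.1, Ne.symm h.2] at hv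
  rcases hvij with rfl | rfl
  · exact ⟨j, hij, rfl⟩
  · refine ⟨i, hij.symm, ?_⟩
    have hs : s(v, i) = s(i, v) := Sym2.eq_swap
    rw [hs, add_comm]

lemma key {G : SimpleGraph (Fin n)} {ω : Sym2 (Fin n) → ℕ} {x y : Fin n}
    (hadj : G.Adj x y) (hly : ∀ j, G.Adj y j → j = x)
    (hmin : ∀ v, G.Adj x v → ω s(x, y) ≤ ω s(x, v))
    {t : ℕ} {d m : Fin n →₀ ℕ}
    (hd : IsSum (edgeExps G ω) (t + 1) d)
    (hle : d ≤ m + (Finsupp.single x (ω s(x, y)) + Finsupp.single y (ω s(x, y)))) :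
    ∃ d', IsSum (edgeExps G ω) t d' ∧ d' ≤ m := by
  classical
  set w := ω s(x, y) with hw
  have hxy : x ≠ y := hadj.ne
  obtain ⟨M, hcard, hmem, rfl⟩ := hd
  by_cases hA : ∃ e ∈ M, e y ≠ 0
  · obtain ⟨e, heM, hey⟩ := hA
    obtain ⟨u, hyu, he⟩ := edgeExps_touch (hmem e heM) hey
    have hux : x = u := (hly u hyu).symm
    subst hux
    have hec : e = Finsupp.single x w + Finsupp.single y w := by
      rw [he]
      have hs : s(y, x) = s(x, y) := Sym2.eq_swap
      rw [hs, add_comm, ← hw]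
    clear he hey
    refine ⟨(M.erase e).sum, ⟨M.erase e,
      by rw [Multiset.card_erase_of_mem heM, hcard]; rfl,
      fun a ha => hmem a (Multiset.mem_of_mem_erase ha), rfl⟩, ?_⟩
    have hsum : M.sum = e + (M.erase e).sum := by
      conv_lhs => rw [← Multiset.cons_erase heM]
      rw [Multiset.sum_cons]
    rw [Finsupp.le_def]
    intro v
    have h1 := Finsupp.le_def.mp hle v
    rw [hsum] at h1
    nth_rewrite 1 [hec] at h1
    simp only [Finsupp.add_apply] at h1 ⊢
    omega
  · push_neg at hA
    have herasey : ∀ (N : Multiset (Fin n →₀ ℕ)), (∀ a ∈ N, a ∈ M) → N.sum y = 0 := by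
      intro N hN
      rw [sum_apply']
      apply Multiset.sum_eq_zero
      intro a ha
      obtain ⟨e', he', rfl⟩ := Multiset.mem_map.mp ha
      exact hA e' (hN e' he')
    by_cases hB : ∃ e ∈ M, e x ≠ 0
    · obtain ⟨e, heM, hex⟩ := hB
      obtain ⟨u, hxu, he⟩ := edgeExps_touch (hmem e heM) hex
      have hw' : w ≤ ω s(x, u) := hmin u hxu
      have hux : u ≠ x := hxu.ne'
      refine ⟨(M.erase e).sum, ⟨M.erase e,
        by rw [Multiset.card_erase_of_mem heM, hcard]; rfl,
        fun a ha => hmem a (Multiset.mem_of_mem_erase ha), rfl⟩, ?_⟩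
      have hsum : M.sum = e + (M.erase e).sum := by
        conv_lhs => rw [← Multiset.cons_erase heM]
        rw [Multiset.sum_cons]
      rw [Finsupp.le_def]
      intro v
      have h1 := Finsupp.le_def.mp hle v
      rw [hsum] at h1
      by_cases hvy : y = v
      · subst hvy
        rw [herasey (M.erase e) (fun a ha => Multiset.mem_of_mem_erase ha)]
        exact Nat.zero_le _
      by_cases hvx : x = v
      · subst hvx
        have hev : e x = ω s(x, u) := by
          rw [he, Finsupp.add_apply, Finsupp.single_eq_same,
            Finsupp.single_eq_of_ne' hux, add_zero]
        simp only [Finsupp.add_apply, hev, Finsupp.single_eq_same,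
          Finsupp.single_eq_of_ne' hvy] at h1
        omega
      · simp only [Finsupp.add_apply, Finsupp.single_eq_of_ne' hvx,
          Finsupp.single_eq_of_ne' hvy] at h1
        omega
    · push_neg at hB
      have hM0 : M ≠ 0 := by intro h; rw [h] at hcard; simp at hcard
      obtain ⟨e, heM⟩ := Multiset.exists_mem_of_ne_zero hM0
      refine ⟨(M.erase e).sum, ⟨M.erase e,
        by rw [Multiset.card_erase_of_mem heM, hcard]; rfl,
        fun a ha => hmem a (Multiset.mem_of_mem_erase ha), rfl⟩, ?_⟩
      have hsum : M.sum = e + (M.erase e).sum := by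
        conv_lhs => rw [← Multiset.cons_erase heM]
        rw [Multiset.sum_cons]
      rw [Finsupp.le_def]
      intro v
      have h1 := Finsupp.le_def.mp hle v
      rw [hsum] at h1
      by_cases hvy : y = v
      · subst hvy
        rw [herasey (M.erase e) (fun a ha => Multiset.mem_of_mem_erase ha)]
        exact Nat.zero_le _
      by_cases hvx : x = v
      · subst hvx
        have hex : (M.erase e).sum x = 0 := by
          rw [sum_apply']
          apply Multiset.sum_eq_zero
          intro a ha
          obtain ⟨e', he', rfl⟩ := Multiset.mem_map.mp ha
          exact hB e' (Multiset.mem_of_mem_erase he')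
        rw [hex]
        exact Nat.zero_le _
      · simp only [Finsupp.add_apply, Finsupp.single_eq_of_ne' hvx,
          Finsupp.single_eq_of_ne' hvy] at h1
        omega


lemma pow_eq_monomial {K : Type} [Field K] (i j : Fin n) (w : ℕ) :
    ((X i * X j : MvPolynomial (Fin n) K)) ^ w
      = monomial (Finsupp.single i w + Finsupp.single j w) (1 : K) := by
  rw [X, X, monomial_mul, one_mul, monomial_pow, one_pow, smul_add,
    Finsupp.smul_single, Finsupp.smul_single, smul_eq_mul, mul_one]

lemma edgeIdeal_eq (K : Type) [Field K] (G : SimpleGraph (Fin n))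
    (ω : Sym2 (Fin n) → ℕ) :
    edgeIdeal K G ω = Ideal.span ((fun d => monomial d (1 : K)) '' edgeExps G ω) := by
  unfold edgeIdeal
  congr 1
  ext f
  constructor
  · rintro ⟨i, j, h, rfl⟩
    exact ⟨_, ⟨i, j, h, rfl⟩, (pow_eq_monomial i j _).symm⟩
  · rintro ⟨d, ⟨i, j, h, rfl⟩, rfl⟩
    exact ⟨i, j, h, (pow_eq_monomial i j _).symm⟩

lemma span_monomial_pow {K : Type} [Field K] (E : Set (Fin n →₀ ℕ)) (t : ℕ) :
    (Ideal.span ((fun d => monomial d (1 : K)) '' E)) ^ t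
      = Ideal.span ((fun d => monomial d (1 : K)) '' {d | IsSum E t d}) := by
  induction t with
  | zero =>
    have h0 : {d : Fin n →₀ ℕ | IsSum E 0 d} = {0} := by
      ext d
      constructor
      · rintro ⟨M, hc, -, rfl⟩
        simp [Multiset.card_eq_zero.mp hc]
      · rintro rfl
        exact ⟨0, rfl, by simp, rfl⟩
    rw [pow_zero, h0, Set.image_singleton, Ideal.one_eq_top]
    rw [show (monomial (0 : Fin n →₀ ℕ) (1 : K)) = 1 by simp]
    rw [Ideal.span_singleton_one]
  | succ t ih =>
    rw [pow_succ, ih, Ideal.span_mul_span']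
    congr 1
    ext f
    simp only [Set.mem_mul, Set.mem_image, Set.mem_setOf_eq]
    constructor
    · rintro ⟨-, ⟨d, ⟨M, hc, hE, rfl⟩, rfl⟩, -, ⟨e, he, rfl⟩, rfl⟩
      refine ⟨M.sum + e, ⟨e ::ₘ M, by simp [hc], ?_, by simp [add_comm]⟩, ?_⟩
      · intro a ha
        rcases Multiset.mem_cons.mp ha with rfl | ha
        · exact he
        · exact hE a ha
      · rw [monomial_mul, mul_one]
    · rintro ⟨d, ⟨M, hc, hE, rfl⟩, rfl⟩
      have hM0 : M ≠ 0 := by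
        intro h; rw [h] at hc; simp at hc
      obtain ⟨e, heM⟩ := Multiset.exists_mem_of_ne_zero hM0
      refine ⟨monomial (M.erase e).sum 1, ⟨(M.erase e).sum,
        ⟨M.erase e, by rw [Multiset.card_erase_of_mem heM, hc]; rfl,
          fun a ha => hE a (Multiset.mem_of_mem_erase ha), rfl⟩, rfl⟩,
        monomial e 1, ⟨e, hE e heM, rfl⟩, ?_⟩
      rw [monomial_mul, mul_one]
      congr 1
      conv_rhs => rw [← Multiset.cons_erase heM]
      rw [Multiset.sum_cons, add_comm]

lemma mem_edgeIdeal_pow {K : Type} [Field K] {G : SimpleGraph (Fin n)}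
    {ω : Sym2 (Fin n) → ℕ} {t : ℕ} {g : MvPolynomial (Fin n) K} :
    g ∈ edgeIdeal K G ω ^ t ↔
      ∀ xi ∈ g.support, ∃ d ∈ {d | IsSum (edgeExps G ω) t d}, d ≤ xi := by
  rw [edgeIdeal_eq, span_monomial_pow, mem_ideal_span_monomial_image]

end ColonPendantAux

/-- **Lemma.** Let `(G_ω, r)` be an increasing weighted tree where `G` is not a star centered
at `r`, and let `xy` be a pendant edge with `deg(y) = 1` and `ω(xy) ≤ ω(xv)` for every
`v ∈ N(x)`. Then `(I(G_ω)^{t+1} : (xy)^{ω(xy)}) = I(G_ω)^t` for all `t ≥ 1`. -/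
theorem colon_pendant_edge {n : ℕ} {K : Type} [Field K]
    (G : SimpleGraph (Fin n)) [DecidableRel G.Adj] (ω : Sym2 (Fin n) → ℕ)
    (htree : G.IsTree) (hpos : ∀ e ∈ G.edgeSet, 1 ≤ ω e)
    (r : Fin n) (hroot : IsIncreasingRoot G ω r)
    (hnotstar : ¬ ∀ e ∈ G.edgeSet, r ∈ e)
    (x y : Fin n) (hadj : G.Adj x y) (hleaf : G.degree y = 1)
    (hmin : ∀ v ∈ G.neighborSet x, ω s(x, y) ≤ ω s(x, v)) :
    ∀ t : ℕ, 1 ≤ t →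
      Submodule.colon (edgeIdeal K G ω ^ (t + 1))
          ((Ideal.span {(X x * X y) ^ ω s(x, y)} : Ideal (MvPolynomial (Fin n) K)) :
            Set (MvPolynomial (Fin n) K)) =
        edgeIdeal K G ω ^ t := by
  intro t _
  classical
  have hly : ∀ j, G.Adj y j → j = x := by
    intro j hyj
    have hx : x ∈ G.neighborFinset y := by
      rw [SimpleGraph.mem_neighborFinset]; exact hadj.symm
    have hj : j ∈ G.neighborFinset y := by
      rw [SimpleGraph.mem_neighborFinset]; exact hyj
    have hc1 : (G.neighborFinset y).card ≤ 1 := le_of_eq hleaf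
    exact Finset.card_le_one.mp hc1 j hj x hx
  have hmin' : ∀ v, G.Adj x v → ω s(x, y) ≤ ω s(x, v) := fun v h =>
    hmin v ((SimpleGraph.mem_neighborSet G x v).mpr h)
  apply le_antisymm
  · intro g hg
    have hf : (X x * X y : MvPolynomial (Fin n) K) ^ ω s(x, y) ∈
        Ideal.span {(X x * X y : MvPolynomial (Fin n) K) ^ ω s(x, y)} :=
      Ideal.mem_span_singleton_self _
    have hgf := Submodule.mem_colon.mp hg _ hf
    rw [smul_eq_mul, ColonPendantAux.pow_eq_monomial] at hgf
    rw [ColonPendantAux.mem_edgeIdeal_pow] at hgf ⊢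
    intro xi hxi
    set c := Finsupp.single x (ω s(x, y)) + Finsupp.single y (ω s(x, y)) with hc
    have hxi' : xi + c ∈ (g * monomial c (1 : K)).support := by
      rw [MvPolynomial.mem_support_iff, MvPolynomial.coeff_mul_monomial, mul_one]
      exact MvPolynomial.mem_support_iff.mp hxi
    obtain ⟨d, hd, hdle⟩ := hgf _ hxi'
    obtain ⟨d', hd', hd'le⟩ :=
      ColonPendantAux.key hadj hly hmin' hd (by rw [← hc]; exact hdle)
    exact ⟨d', hd', hd'le⟩
  · intro g hg
    rw [Submodule.mem_colon]
    intro p hp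
    obtain ⟨a, rfl⟩ := Ideal.mem_span_singleton'.mp hp
    rw [smul_eq_mul]
    have hf : (X x * X y : MvPolynomial (Fin n) K) ^ ω s(x, y) ∈ edgeIdeal K G ω :=
      Ideal.subset_span ⟨x, y, hadj, rfl⟩
    have hmem : g * (X x * X y : MvPolynomial (Fin n) K) ^ ω s(x, y) ∈
        edgeIdeal K G ω ^ (t + 1) := by
      rw [pow_succ]
      exact Ideal.mul_mem_mul hg hf
    have : g * (a * (X x * X y) ^ ω s(x, y))
        = a * (g * (X x * X y) ^ ω s(x, y)) := by ring
    rw [this]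
    exact Ideal.mul_mem_left _ a hmem
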